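/- Let p be a prime and let R be an integral domain of characteristic p having exactly two maximal ideals m_1 and m_2 (m_1 ≠ m_2). Suppose that for i = 1, 2 the Artin–Schreier map x ↦ x^p − x is a surjection from the localization R_{m_i} onto itself. Then the Artin–Schreier map x ↦ x^p − x is a surjection from R onto R. -/

import Mathlib

-- In a field of characteristic p, the roots of X^p - X are exactly the prime field.
lemma aux_root (p : ℕ) (hp : p.Prime) (K : Type*) [Field K] [CharP K p] (d : K)
    (hd : d ^ p = d) : ∃ c : ZMod p, (ZMod.castHom (dvd_refl p) K) c = d := by
  haveI := Fact.mk hp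
  classical
  set g := ZMod.castHom (dvd_refl p) K with hg
  have hginj : Function.Injective g := g.injective
  set f : Polynomial K := Polynomial.X ^ p - Polynomial.X with hf
  have h1 : f.natDegree = p := by
    have hlt : (Polynomial.X : Polynomial K).natDegree <
        ((Polynomial.X : Polynomial K) ^ p).natDegree := by
      simp [Polynomial.natDegree_X_pow, hp.one_lt]
    simpa [hf, Polynomial.natDegree_X_pow] using
      Polynomial.natDegree_sub_eq_left_of_natDegree_lt hlt
  have hf0 : f ≠ 0 := by
    intro h
    rw [h, Polynomial.natDegree_zero] at h1
    exact hp.ne_zero h1.symm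
  have hroot : ∀ z : K, z ^ p = z → z ∈ f.roots := by
    intro z hz
    rw [Polynomial.mem_roots hf0]
    simp [hf, Polynomial.IsRoot, hz]
  have hsub : (Finset.univ.image g) ⊆ f.roots.toFinset := by
    intro z hz
    obtain ⟨c, _, rfl⟩ := Finset.mem_image.mp hz
    rw [Multiset.mem_toFinset]
    apply hroot
    rw [← map_pow, ZMod.pow_card]
  have hcard : f.roots.toFinset.card ≤ p := by
    calc f.roots.toFinset.card ≤ Multiset.card f.roots := Multiset.toFinset_card_le _
      _ ≤ f.natDegree := Polynomial.card_roots' f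
      _ = p := h1
  have himg : (Finset.univ.image g).card = p := by
    rw [Finset.card_image_of_injective _ hginj, Finset.card_univ, ZMod.card]
  have heq : Finset.univ.image g = f.roots.toFinset :=
    Finset.eq_of_subset_of_card_le hsub (by rw [himg]; exact hcard)
  have hd' : d ∈ f.roots.toFinset := Multiset.mem_toFinset.mpr (hroot d hd)
  rw [← heq] at hd'
  obtain ⟨c, _, hc⟩ := Finset.mem_image.mp hd'
  exact ⟨c, hc⟩

lemma aux_loc (p : ℕ) (hp : p.Prime) (R : Type*) [CommRing R] [IsDomain R]
    (m : Ideal R) [m.IsPrime] (y : R)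
    (h : ∃ x : Localization.AtPrime m, x ^ p - x = algebraMap R _ y) :
    ∃ a s : R, s ∉ m ∧ a ^ p = a * s ^ (p - 1) + y * s ^ p := by
  obtain ⟨x, hx⟩ := h
  obtain ⟨⟨a, s⟩, rfl⟩ := IsLocalization.mk'_surjective m.primeCompl x
  dsimp only at hx
  set A := algebraMap R (Localization.AtPrime m) with hA
  set x := IsLocalization.mk' (Localization.AtPrime m) a s with hxdef
  have hspec : x * A (s : R) = A a := IsLocalization.mk'_spec _ a s
  obtain ⟨q, hq⟩ : ∃ q, p = q + 1 := ⟨p - 1, (Nat.succ_pred_eq_of_pos hp.pos).symm⟩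
  have hq' : p - 1 = q := by omega
  have key : A (a ^ p - a * (s : R) ^ (p - 1) - y * (s : R) ^ p) = 0 := by
    rw [hq'] at *
    rw [hq] at hx ⊢
    rw [map_sub, map_sub, map_mul, map_mul, map_pow, map_pow, map_pow, ← hspec]
    linear_combination (A (s : R)) ^ (q + 1) * hx
  have hinj : Function.Injective A := by
    apply IsLocalization.injective (M := m.primeCompl)
    intro z hz
    exact mem_nonZeroDivisors_of_ne_zero (fun h0 => hz (h0 ▸ m.zero_mem))
  have hz : a ^ p - a * (s : R) ^ (p - 1) - y * (s : R) ^ p = 0 := hinj (by rw [key, map_zero])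
  exact ⟨a, s, s.2, by linear_combination hz⟩

/-- Let `R` be an integral domain of characteristic `p` with exactly two
maximal ideals `m₁ ≠ m₂`.  If the Artin–Schreier map is surjective on both localizations
`R_{m₁}` and `R_{m₂}`, then it is surjective on `R`. -/
theorem stmt_8 (p : ℕ) (hp : p.Prime) (R : Type*) [CommRing R] [IsDomain R] [CharP R p]
    (m₁ m₂ : Ideal R) [m₁.IsMaximal] [m₂.IsMaximal] (hne : m₁ ≠ m₂)
    (hall : ∀ m : Ideal R, m.IsMaximal → m = m₁ ∨ m = m₂)
    (hs₁ : Function.Surjective (fun x : Localization.AtPrime m₁ => x ^ p - x))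
    (hs₂ : Function.Surjective (fun x : Localization.AtPrime m₂ => x ^ p - x)) :
    Function.Surjective (fun x : R => x ^ p - x) := by
  haveI := Fact.mk hp
  intro y
  obtain ⟨a₁, s₁, hs1m, h1⟩ := aux_loc p hp R m₁ y (hs₁ (algebraMap R _ y))
  obtain ⟨a₂, s₂, hs2m, h2⟩ := aux_loc p hp R m₂ y (hs₂ (algebraMap R _ y))
  set K := FractionRing R with hK
  set f := algebraMap R K with hfdef
  have hinj : Function.Injective f := IsFractionRing.injective R K
  haveI : CharP K p := charP_of_injective_algebraMap hinj p
  have hs₁0 : (s₁ : R) ≠ 0 := fun h => hs1m (h ▸ m₁.zero_mem)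
  have hs₂0 : (s₂ : R) ≠ 0 := fun h => hs2m (h ▸ m₂.zero_mem)
  have hfs₁ : f s₁ ≠ 0 := fun h => hs₁0 (hinj (h.trans (map_zero f).symm))
  have hfs₂ : f s₂ ≠ 0 := fun h => hs₂0 (hinj (h.trans (map_zero f).symm))
  obtain ⟨q, hq⟩ : ∃ q, p = q + 1 := ⟨p - 1, (Nat.succ_pred_eq_of_pos hp.pos).symm⟩
  have hq' : p - 1 = q := by omega
  rw [hq'] at h1 h2
  set u₁ : K := f a₁ / f s₁ with hu₁def
  set u₂ : K := f a₂ / f s₂ with hu₂def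
  have hu₁ : u₁ ^ p - u₁ = f y := by
    have h1' := congrArg f h1
    rw [map_pow, map_add, map_mul, map_mul, map_pow, map_pow] at h1'
    rw [hq, hu₁def] at *
    rw [div_pow, div_sub_div _ _ (pow_ne_zero _ hfs₁) hfs₁,
      div_eq_iff (mul_ne_zero (pow_ne_zero _ hfs₁) hfs₁)]
    linear_combination f s₁ * h1'
  have hu₂ : u₂ ^ p - u₂ = f y := by
    have h2' := congrArg f h2
    rw [map_pow, map_add, map_mul, map_mul, map_pow, map_pow] at h2'
    rw [hq, hu₂def] at *
    rw [div_pow, div_sub_div _ _ (pow_ne_zero _ hfs₂) hfs₂,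
      div_eq_iff (mul_ne_zero (pow_ne_zero _ hfs₂) hfs₂)]
    linear_combination f s₂ * h2'
  have hd : (u₁ - u₂) ^ p = u₁ - u₂ := by
    rw [sub_pow_char]
    linear_combination hu₁ - hu₂
  obtain ⟨c0, hc0⟩ := aux_root p hp K (u₁ - u₂) hd
  set c : R := ZMod.castHom (dvd_refl p) R c0 with hcdef
  have hfc : f c = u₁ - u₂ := by
    have hcomp : f.comp (ZMod.castHom (dvd_refl p) R) = ZMod.castHom (dvd_refl p) K :=
      RingHom.ext_zmod _ _
    rw [hcdef, ← RingHom.comp_apply, hcomp, hc0]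
  have hcross : a₁ * s₂ = (a₂ + c * s₂) * s₁ := by
    apply hinj
    rw [map_mul, map_mul, map_add, map_mul]
    have : u₁ = u₂ + f c := by rw [hfc]; ring
    rw [hu₁def, hu₂def] at this
    rw [div_eq_iff hfs₁, div_add' _ _ _ hfs₂, div_mul_eq_mul_div, eq_div_iff hfs₂] at this
    linear_combination this
  have hspan : Ideal.span {(s₁ : R), (s₂ : R)} = ⊤ := by
    by_contra h
    obtain ⟨m, hm, hle⟩ := Ideal.exists_le_maximal _ h
    rcases hall m hm with rfl | rfl
    · exact hs1m (hle (Ideal.subset_span (by simp)))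
    · exact hs2m (hle (Ideal.subset_span (by simp)))
  obtain ⟨u, v, huv⟩ := Ideal.mem_span_pair.mp
    (hspan ▸ Submodule.mem_top : (1 : R) ∈ Ideal.span {(s₁ : R), (s₂ : R)})
  set x : R := u * a₁ + v * (a₂ + c * s₂) with hxdef
  have hxs : x * s₁ = a₁ := by
    rw [hxdef]
    linear_combination a₁ * huv - v * hcross
  have hfx : f x = u₁ := by
    rw [hu₁def, eq_div_iff hfs₁, ← map_mul, hxs]
  refine ⟨x, ?_⟩
  apply hinj
  rw [map_sub, map_pow, hfx, hu₁]
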